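/- Let ω = exp(2πi/5) and let c₀, c₁, c₂, c₃, c₄ be complex numbers (indices taken modulo 5). For k = 0, …, 4 let S_k be the 2×2 complex matrix with rows (c_k, 1) and (−ω, 0). Then S₄·S₃·S₂·S₁·S₀ equals the identity matrix if and only if c_k + ω² c_{k+2} c_{k+3} − ω³ = 0 for every k modulo 5. -/
import Mathlib


open Complex

/-- `ω = exp(2πi/5)`. -/
noncomputable def ω5 : ℂ := Complex.exp (2 * (Real.pi : ℂ) * Complex.I / 5)

/-- The Stokes matrix `S_k` built from the numbers `c_k`. -/
noncomputable def Smat (c : ZMod 5 → ℂ) (k : ZMod 5) : Matrix (Fin 2) (Fin 2) ℂ :=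
  !![c k, 1; -ω5, 0]

lemma ω5_pow_five : ω5 ^ 5 = 1 := by
  rw [ω5, ← Complex.exp_nat_mul]
  rw [show (5 : ℕ) * (2 * (Real.pi : ℂ) * Complex.I / 5) = 2 * Real.pi * Complex.I by
    push_cast; ring]
  exact Complex.exp_two_pi_mul_I

lemma mat2_eq_one_iff (a b d e : ℂ) :
    !![a, b; d, e] = 1 ↔ a = 1 ∧ b = 0 ∧ d = 0 ∧ e = 1 := by
  rw [Matrix.one_fin_two, ← Matrix.ext_iff]
  simp [Fin.forall_fin_two, and_assoc]

lemma Smat_prod (c : ZMod 5 → ℂ) :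
    Smat c 4 * Smat c 3 * Smat c 2 * Smat c 1 * Smat c 0 =
      !![c 0 * c 1 * c 2 * c 3 * c 4
            - ω5 * (c 2 * c 3 * c 4 + c 0 * c 3 * c 4 + c 0 * c 1 * c 4 + c 0 * c 1 * c 2)
            + ω5 ^ 2 * (c 0 + c 2 + c 4),
          c 1 * c 2 * c 3 * c 4 - ω5 * (c 1 * c 4 + c 3 * c 4 + c 1 * c 2) + ω5 ^ 2;
          -ω5 * (c 0 * c 1 * c 2 * c 3) + ω5 ^ 2 * (c 2 * c 3 + c 0 * c 3 + c 0 * c 1) - ω5 ^ 3,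
          -ω5 * (c 1 * c 2 * c 3) + ω5 ^ 2 * (c 1 + c 3)] := by
  ext i j
  fin_cases i <;> fin_cases j <;> simp [Smat, Matrix.mul_fin_two] <;> ring

/-- `S₄·S₃·S₂·S₁·S₀ = 1` if and only if `c_k + ω² c_{k+2} c_{k+3} − ω³ = 0` for every `k`
modulo 5 (Propositions 3.2–3.3). -/
theorem stokes_matrix_identity (c : ZMod 5 → ℂ) :
    Smat c 4 * Smat c 3 * Smat c 2 * Smat c 1 * Smat c 0 = 1 ↔
      ∀ k : ZMod 5, c k + ω5 ^ 2 * c (k + 2) * c (k + 3) - ω5 ^ 3 = 0 := by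
  have hw : ω5 ^ 5 = 1 := ω5_pow_five
  rw [Smat_prod, mat2_eq_one_iff]
  constructor
  · rintro ⟨h00, h01, h10, h11⟩ k
    have hA00 : c 0 * c 1 * c 2 * c 3 - ω5 * (c 2 * c 3 + c 0 * c 3 + c 0 * c 1) + ω5 ^ 2 = 0 := by
      linear_combination (-ω5 ^ 4) * h10
        - (c 0 * c 1 * c 2 * c 3 - ω5 * (c 2 * c 3 + c 0 * c 3 + c 0 * c 1) + ω5 ^ 2) * hw
    have hF1 : c 1 * c 2 * c 3 - ω5 * c 1 - ω5 * c 3 + ω5 ^ 4 = 0 := by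
      linear_combination (-ω5 ^ 4) * h11 - (c 1 * c 2 * c 3 - ω5 * c 1 - ω5 * c 3) * hw
    have hF0 : c 0 * c 1 * c 2 - ω5 * c 0 - ω5 * c 2 + ω5 ^ 4 = 0 := by
      linear_combination (-ω5 ^ 4) * h00 + ω5 ^ 4 * c 4 * hA00
        - (c 0 * c 1 * c 2 - ω5 * c 0 - ω5 * c 2) * hw
    have hE4 : c 4 + ω5 ^ 2 * c 1 * c 2 - ω5 ^ 3 = 0 := by
      linear_combination (-ω5) * h01 + ω5 * c 4 * hF1 - c 4 * hw
    have hE0 : c 0 + ω5 ^ 2 * c 2 * c 3 - ω5 ^ 3 = 0 := by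
      linear_combination (-ω5) * hA00 + ω5 * c 0 * hF1 - c 0 * hw
    have hE3 : c 3 + ω5 ^ 2 * c 0 * c 1 - ω5 ^ 3 = 0 := by
      linear_combination (-ω5) * hA00 + ω5 * c 3 * hF0 - c 3 * hw
    have hE1 : c 1 + ω5 ^ 2 * c 3 * c 4 - ω5 ^ 3 = 0 := by
      linear_combination ω5 ^ 2 * c 3 * hE4 - ω5 ^ 4 * hF1 + (ω5 ^ 3 - c 1) * hw
    have hE2 : c 2 + ω5 ^ 2 * c 4 * c 0 - ω5 ^ 3 = 0 := by
      linear_combination ω5 ^ 2 * c 0 * hE4 - ω5 ^ 4 * hF0 + (ω5 ^ 3 - c 2) * hw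
    fin_cases k
    · exact hE0
    · exact hE1
    · exact hE2
    · exact hE3
    · exact hE4
  · intro h
    have hE0 : c 0 + ω5 ^ 2 * c 2 * c 3 - ω5 ^ 3 = 0 := h 0
    have hE1 : c 1 + ω5 ^ 2 * c 3 * c 4 - ω5 ^ 3 = 0 := h 1
    have hE2 : c 2 + ω5 ^ 2 * c 4 * c 0 - ω5 ^ 3 = 0 := h 2
    have hE3 : c 3 + ω5 ^ 2 * c 0 * c 1 - ω5 ^ 3 = 0 := h 3
    have hE4 : c 4 + ω5 ^ 2 * c 1 * c 2 - ω5 ^ 3 = 0 := h 4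
    refine ⟨?_, ?_, ?_, ?_⟩
    · linear_combination (ω5 ^ 3 * c 0 * c 3 * c 4 - ω5 ^ 4 * c 0) * hE4
        + (ω5 ^ 2 - ω5 * c 3 * c 4) * hE2 - ω5 ^ 4 * c 4 * hE3
        + ((-(c 0 * c 1 * c 2 * c 3) + ω5 * c 0 * c 3 + ω5 * c 0 * c 1 - ω5 ^ 2) * c 4
            + ω5 * (c 0 * c 1 * c 2 - ω5 * c 0) + 1) * hw
    · linear_combination (ω5 ^ 3 * c 1 * c 4) * hE0 - ω5 * c 4 * hE3 - ω5 ^ 4 * hE4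
        + (-(c 1 * c 2 * c 3 * c 4) + ω5 * c 1 * c 4 + ω5 * c 1 * c 2 - ω5 ^ 2) * hw
    · linear_combination (-(ω5 ^ 4) * c 0 * c 3) * hE4 + ω5 ^ 2 * c 3 * hE2 + ω5 ^ 5 * hE3
        + (ω5 * (c 0 * c 1 * c 2 * c 3) - ω5 ^ 2 * c 0 * c 3 - ω5 ^ 2 * c 0 * c 1 + ω5 ^ 3) * hw
    · linear_combination (-(ω5 ^ 4) * c 1) * hE0 + ω5 ^ 2 * hE3
        + (1 + ω5 * c 1 * c 2 * c 3 - ω5 ^ 2 * c 1) * hw
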